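/- Fix integers n ≥ k ≥ 3 and let the edges of K_n carry independent uniform [0,1] weights. Let α and β be two k-element vertex subsets sharing exactly ℓ vertices, 2 ≤ ℓ ≤ k−1, and set m_ℓ = C(k,2) − C(ℓ,2). Then for every w with 0 ≤ w ≤ 1, the conditional probability that the clique on β has total weight at most w, given that the clique on α has total weight at most w, is at most w^{m_ℓ}/m_ℓ!. -/

import Mathlib

open MeasureTheory

/-- Product measure on the edge weights of `K_n`: each edge (element of `Sym2 (Fin n)`)
gets an independent uniform `[0,1]` weight. -/
noncomputable def edgeMeasure (n : ℕ) : Measure (Sym2 (Fin n) → ℝ) :=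
  Measure.pi fun _ => volume.restrict (Set.Icc (0 : ℝ) 1)

/-- The weight of the clique on the vertex set `S`: the sum of the weights of the
edges with both endpoints in `S`. -/
noncomputable def cliqueWeight {n : ℕ} (S : Finset (Fin n)) (ω : Sym2 (Fin n) → ℝ) : ℝ :=
  ∑ e ∈ S.sym2.filter (fun e => ¬ e.IsDiag), ω e

open ProbabilityTheory Set Function
open scoped ENNReal

lemma my_pi_map_eval {ι : Type*} [Fintype ι] {α : ι → Type*} [∀ i, MeasurableSpace (α i)]
    (μ : ∀ i, Measure (α i)) [∀ i, IsProbabilityMeasure (μ i)] (i : ι) :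
    (Measure.pi μ).map (Function.eval i) = μ i := by
  classical
  ext s hs
  rw [Measure.map_apply (measurable_pi_apply i) hs, ← Set.univ_pi_update_univ, Measure.pi_pi]
  rw [Fintype.prod_eq_single i (fun j hj => by rw [Function.update_of_ne hj]; exact measure_univ)]
  rw [Function.update_self]

lemma my_iIndepFun_eval {ι : Type*} [Fintype ι] {α : ι → Type*} [∀ i, MeasurableSpace (α i)]
    (μ : ∀ i, Measure (α i)) [∀ i, IsProbabilityMeasure (μ i)] :
    iIndepFun (fun i => (Function.eval i : (∀ j, α j) → α i))
      (Measure.pi μ) := by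
  classical
  rw [iIndepFun_iff_measure_inter_preimage_eq_mul]
  intro S sets hmeas
  have h1 : (⋂ i ∈ S, Function.eval i ⁻¹' sets i)
      = Set.pi Set.univ (fun i => if i ∈ S then sets i else Set.univ) := by
    ext x
    simp only [Set.mem_iInter, Set.mem_pi, Set.mem_univ, true_implies, Set.mem_preimage]
    constructor
    · intro h i; split_ifs with hi
      exacts [h i hi, Set.mem_univ _]
    · intro h i hi; have := h i; rwa [if_pos hi] at this
  rw [h1, Measure.pi_pi]
  have h2 : ∀ i : ι, μ i (if i ∈ S then sets i else Set.univ)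
      = if i ∈ S then μ i (sets i) else 1 := by
    intro i; split_ifs <;> simp
  simp_rw [h2]
  rw [Finset.prod_ite_mem Finset.univ S, Finset.univ_inter]
  refine Finset.prod_congr rfl fun i hi => ?_
  rw [← my_pi_map_eval μ i, Measure.map_apply (measurable_pi_apply i) (hmeas i hi)]

instance my_prob : IsProbabilityMeasure (volume.restrict (Set.Icc (0:ℝ) 1)) :=
  ⟨by simp [Real.volume_Icc]⟩

lemma my_ae_mem_Icc {ι : Type*} [Fintype ι] :
    ∀ᵐ ω ∂(Measure.pi fun _ : ι => volume.restrict (Set.Icc (0:ℝ) 1)),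
      ∀ i, ω i ∈ Set.Icc (0:ℝ) 1 :=
  ae_all_iff.2 fun i =>
    (MeasureTheory.Measure.tendsto_eval_ae_ae (i := i)).eventually (ae_restrict_mem measurableSet_Icc)

lemma my_simplex_bound {ι : Type*} [Fintype ι] [DecidableEq ι] (F : Finset ι) :
    ∀ w : ℝ, 0 ≤ w → w ≤ 1 →
    (Measure.pi fun _ : ι => volume.restrict (Set.Icc (0:ℝ) 1)) {ω | ∑ e ∈ F, ω e ≤ w}
      ≤ ENNReal.ofReal (w ^ F.card / F.card.factorial) := by
  classical
  set μ := (Measure.pi fun _ : ι => volume.restrict (Set.Icc (0:ℝ) 1)) with hμ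
  induction F using Finset.induction_on with
  | empty =>
    intro w hw0 hw1
    simp only [Finset.sum_empty, Finset.card_empty, pow_zero, Nat.factorial_zero,
      Nat.cast_one, div_one, ENNReal.ofReal_one]
    have : {ω : ι → ℝ | (0:ℝ) ≤ w} = Set.univ := Set.eq_univ_of_forall fun _ => hw0
    rw [this]
    exact measure_univ.le
  | insert _ _ ha ih =>
    rename_i a s
    intro w hw0 hw1
    set m := s.card with hm
    have hYmeas : Measurable (fun ω : ι → ℝ => ∑ e ∈ s, ω e) :=
      Finset.measurable_sum _ fun i _ => measurable_pi_apply i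
    have h_ind : IndepFun (fun ω : ι → ℝ => ω a) (fun ω : ι → ℝ => ∑ e ∈ s, ω e) μ := by
      have := ((my_iIndepFun_eval (fun _ : ι => volume.restrict (Set.Icc (0:ℝ) 1))).indepFun_finsetSum_of_notMem
        (fun i => measurable_pi_apply i) ha).symm
      convert this using 1
      · rfl
      · rfl
      · funext ω; simp [Finset.sum_apply]
    have h_map : μ.map (fun ω => (ω a, ∑ e ∈ s, ω e))
        = (μ.map (fun ω => ω a)).prod (μ.map (fun ω => ∑ e ∈ s, ω e)) :=
      (indepFun_iff_map_prod_eq_prod_map_map (measurable_pi_apply a).aemeasurable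
        hYmeas.aemeasurable).1 h_ind
    have hSmeas : MeasurableSet {p : ℝ × ℝ | p.1 + p.2 ≤ w} :=
      measurableSet_le (measurable_fst.add measurable_snd) measurable_const
    have hset : {ω : ι → ℝ | ∑ e ∈ insert a s, ω e ≤ w}
        = (fun ω => (ω a, ∑ e ∈ s, ω e)) ⁻¹' {p : ℝ × ℝ | p.1 + p.2 ≤ w} := by
      ext ω; simp [Finset.sum_insert ha]
    rw [hset, ← Measure.map_apply ((measurable_pi_apply a).prodMk hYmeas) hSmeas, h_map,
      Measure.prod_apply hSmeas]
    have hslice : ∀ t : ℝ, Prod.mk t ⁻¹' {p : ℝ × ℝ | p.1 + p.2 ≤ w} = Set.Iic (w - t) := by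
      intro t; ext y; simp [Set.mem_Iic, le_sub_iff_add_le']
    simp_rw [hslice]
    rw [my_pi_map_eval]
    -- bound the integrand
    set g : ℝ → ℝ≥0∞ :=
      Set.indicator (Set.Icc 0 w) (fun t => ENNReal.ofReal ((w - t) ^ m / m.factorial)) with hg
    have hbound : ∀ t ∈ Set.Icc (0:ℝ) 1,
        (μ.map (fun ω => ∑ e ∈ s, ω e)) (Set.Iic (w - t)) ≤ g t := by
      intro t ht
      rw [Measure.map_apply hYmeas measurableSet_Iic]
      by_cases htw : t ≤ w
      · have h1 : g t = ENNReal.ofReal ((w - t) ^ m / m.factorial) := by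
          rw [hg, Set.indicator_of_mem (Set.mem_Icc.2 ⟨ht.1, htw⟩)]
        rw [h1]
        have h2 := ih (w - t) (by linarith) (by linarith [ht.1])
        exact h2
      · have hz : μ {ω : ι → ℝ | ¬ ∀ i, ω i ∈ Set.Icc (0:ℝ) 1} = 0 :=
          ae_iff.1 my_ae_mem_Icc
        have h0 : μ ((fun ω => ∑ e ∈ s, ω e) ⁻¹' Set.Iic (w - t)) = 0 := by
          refine measure_mono_null ?_ hz
          intro ω hmem
          simp only [Set.mem_preimage, Set.mem_Iic] at hmem
          simp only [Set.mem_setOf_eq]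
          intro hP
          have hY : 0 ≤ ∑ e ∈ s, ω e := Finset.sum_nonneg fun i _ => (hP i).1
          push_neg at htw
          linarith
        rw [h0]; exact zero_le
    calc ∫⁻ t, (μ.map (fun ω => ∑ e ∈ s, ω e)) (Set.Iic (w - t))
            ∂(volume.restrict (Set.Icc (0:ℝ) 1))
        ≤ ∫⁻ t, g t ∂(volume.restrict (Set.Icc (0:ℝ) 1)) := by
          refine lintegral_mono_ae ?_
          filter_upwards [ae_restrict_mem measurableSet_Icc] with t ht
          exact hbound t ht
      _ ≤ ∫⁻ t, g t ∂volume := lintegral_mono' Measure.restrict_le_self le_rfl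
      _ = ∫⁻ t in Set.Icc 0 w, ENNReal.ofReal ((w - t) ^ m / m.factorial) ∂volume := by
          rw [hg, lintegral_indicator measurableSet_Icc]
      _ = ENNReal.ofReal (∫ t in Set.Icc 0 w, (w - t) ^ m / m.factorial) := by
          rw [← ofReal_integral_eq_lintegral_ofReal]
          · exact (Continuous.integrableOn_Icc (by fun_prop))
          · filter_upwards [ae_restrict_mem measurableSet_Icc] with t ht
            exact div_nonneg (pow_nonneg (by linarith [ht.2]) m) (by positivity)
      _ = ENNReal.ofReal (w ^ (insert a s).card / ((insert a s).card.factorial)) := by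
          congr 1
          rw [MeasureTheory.integral_Icc_eq_integral_Ioc,
            ← intervalIntegral.integral_of_le hw0]
          rw [intervalIntegral.integral_div]
          rw [intervalIntegral.integral_comp_sub_left (fun x => x ^ m) w]
          simp only [sub_self, sub_zero]
          rw [integral_pow]
          rw [Finset.card_insert_of_notMem ha, Nat.factorial_succ]
          push_cast
          rw [zero_pow (by omega)]
          field_simp
          rw [← hm]
          ring

lemma my_edges_card {α : Type*} [DecidableEq α] (s : Finset α) :
    (s.sym2.filter (fun e => ¬ e.IsDiag)).card = s.card.choose 2 := by
  have h : s.sym2.filter (fun e => ¬ e.IsDiag) = s.offDiag.image Sym2.mk.uncurry := by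
    ext e
    induction e using Sym2.ind with
    | _ x y =>
      simp only [Finset.mem_filter, Finset.mk_mem_sym2_iff, Sym2.isDiag_iff_proj_eq,
        Finset.mem_image, Finset.mem_offDiag, Prod.exists, Function.uncurry_apply_pair]
      constructor
      · rintro ⟨⟨hx, hy⟩, hne⟩
        exact ⟨x, y, ⟨hx, hy, hne⟩, rfl⟩
      · rintro ⟨a, b, ⟨ha, hb, hab⟩, heq⟩
        rw [Sym2.eq_iff] at heq
        rcases heq with ⟨rfl, rfl⟩ | ⟨rfl, rfl⟩
        · exact ⟨⟨ha, hb⟩, hab⟩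
        · exact ⟨⟨hb, ha⟩, fun h => hab h.symm⟩
  rw [h, Sym2.card_image_offDiag]

lemma my_edges_inter {α : Type*} [DecidableEq α] (s t : Finset α) :
    (s.sym2.filter fun e => ¬ e.IsDiag) ∩ (t.sym2.filter fun e => ¬ e.IsDiag)
      = ((s ∩ t).sym2.filter fun e => ¬ e.IsDiag) := by
  ext e
  simp only [Finset.mem_inter, Finset.mem_filter, Finset.mem_sym2_iff, Finset.mem_inter]
  constructor
  · rintro ⟨⟨h1, h2⟩, ⟨h3, -⟩⟩
    exact ⟨fun a ha => ⟨h1 a ha, h3 a ha⟩, h2⟩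
  · rintro ⟨h1, h2⟩
    exact ⟨⟨fun a ha => (h1 a ha).1, h2⟩, fun a ha => (h1 a ha).2, h2⟩

theorem statement9 (n k ℓ : ℕ) (hk : 3 ≤ k) (hkn : k ≤ n)
    (hl2 : 2 ≤ ℓ) (hlk : ℓ ≤ k - 1)
    (α β : Finset (Fin n)) (hα : α.card = k) (hβ : β.card = k)
    (hshared : (α ∩ β).card = ℓ)
    (w : ℝ) (hw0 : 0 ≤ w) (hw1 : w ≤ 1) :
    ((ProbabilityTheory.cond (edgeMeasure n) {ω | cliqueWeight α ω ≤ w})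
          {ω | cliqueWeight β ω ≤ w}).toReal
      ≤ w ^ (k.choose 2 - ℓ.choose 2) / ((k.choose 2 - ℓ.choose 2).factorial : ℝ) := by
  classical
  haveI : IsProbabilityMeasure (edgeMeasure n) := by
    unfold edgeMeasure; infer_instance
  set μ := edgeMeasure n with hμdef
  set m := k.choose 2 - ℓ.choose 2 with hm
  set E := α.sym2.filter (fun e => ¬ e.IsDiag) with hE
  set Fs := (β.sym2.filter (fun e => ¬ e.IsDiag)) \ E with hFs
  have hRHS : (0:ℝ) ≤ w ^ m / (m.factorial : ℝ) :=
    div_nonneg (pow_nonneg hw0 m) (by positivity)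
  -- card of Fs
  have hFcard : Fs.card = m := by
    have h1 := Finset.card_sdiff_add_card_inter (β.sym2.filter fun e => ¬ e.IsDiag)
      (α.sym2.filter fun e => ¬ e.IsDiag)
    rw [my_edges_inter, Finset.inter_comm β α, my_edges_card, hshared, my_edges_card, hβ] at h1
    have h2 : ℓ.choose 2 ≤ k.choose 2 :=
      Nat.choose_le_choose 2 (le_trans hlk (Nat.sub_le k 1))
    rw [hFs, hE, hm]
    omega
  -- measurability
  have hXmeas : Measurable (fun ω : Sym2 (Fin n) → ℝ => cliqueWeight α ω) := by
    unfold cliqueWeight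
    exact Finset.measurable_sum _ fun i _ => measurable_pi_apply i
  have hYmeas : Measurable (fun ω : Sym2 (Fin n) → ℝ => ∑ e ∈ Fs, ω e) :=
    Finset.measurable_sum _ fun i _ => measurable_pi_apply i
  have hA : MeasurableSet {ω : Sym2 (Fin n) → ℝ | cliqueWeight α ω ≤ w} :=
    measurableSet_le hXmeas measurable_const
  -- independence
  have hbase : ProbabilityTheory.iIndepFun
      (fun i => (Function.eval i : (Sym2 (Fin n) → ℝ) → ℝ)) μ := by
    rw [hμdef]; unfold edgeMeasure; exact my_iIndepFun_eval _
  have hIndep : IndepFun (fun ω : Sym2 (Fin n) → ℝ => cliqueWeight α ω)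
      (fun ω : Sym2 (Fin n) → ℝ => ∑ e ∈ Fs, ω e) μ := by
    have h := hbase.indepFun_finset E Fs Finset.disjoint_sdiff
      (fun i => measurable_pi_apply i)
    have h2 := h.comp (φ := fun x : ↥E → ℝ => ∑ i, x i)
      (ψ := fun x : ↥Fs → ℝ => ∑ i, x i)
      (Finset.measurable_sum _ fun i _ => measurable_pi_apply i)
      (Finset.measurable_sum _ fun i _ => measurable_pi_apply i)
    convert h2 using 1
    · funext ω
      simp only [Function.comp_apply, cliqueWeight, ← hE]
      exact (Finset.sum_coe_sort E (fun e => ω e)).symm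
    · funext ω
      simp only [Function.comp_apply]
      exact (Finset.sum_coe_sort Fs (fun e => ω e)).symm
  have hmul : μ ({ω | cliqueWeight α ω ≤ w} ∩ {ω | ∑ e ∈ Fs, ω e ≤ w})
      = μ {ω | cliqueWeight α ω ≤ w} * μ {ω | ∑ e ∈ Fs, ω e ≤ w} :=
    hIndep.measure_inter_preimage_eq_mul (Set.Iic w) (Set.Iic w)
      measurableSet_Iic measurableSet_Iic
  -- a.e. nonneg
  have hae : ∀ᵐ ω ∂μ, ∀ i, ω i ∈ Set.Icc (0:ℝ) 1 := by
    rw [hμdef]; unfold edgeMeasure; exact my_ae_mem_Icc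
  -- inclusion
  have hsub : μ ({ω | cliqueWeight α ω ≤ w} ∩ {ω | cliqueWeight β ω ≤ w})
      ≤ μ ({ω | cliqueWeight α ω ≤ w} ∩ {ω | ∑ e ∈ Fs, ω e ≤ w}) := by
    refine measure_mono_ae ?_
    filter_upwards [hae] with ω h hmem
    refine ⟨hmem.1, ?_⟩
    have hle : ∑ e ∈ Fs, ω e ≤ cliqueWeight β ω := by
      unfold cliqueWeight
      exact Finset.sum_le_sum_of_subset_of_nonneg Finset.sdiff_subset
        (fun i _ _ => (h i).1)
    exact Set.mem_setOf_eq ▸ le_trans hle hmem.2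
  -- simplex bound
  have hC : μ {ω | ∑ e ∈ Fs, ω e ≤ w} ≤ ENNReal.ofReal (w ^ m / (m.factorial : ℝ)) := by
    have h := my_simplex_bound Fs w hw0 hw1
    rw [hFcard] at h
    rw [hμdef]; unfold edgeMeasure; exact h
  rw [ProbabilityTheory.cond_apply hA]
  by_cases h0 : μ {ω | cliqueWeight α ω ≤ w} = 0
  · have hz : μ ({ω | cliqueWeight α ω ≤ w} ∩ {ω | cliqueWeight β ω ≤ w}) = 0 :=
      measure_mono_null Set.inter_subset_left h0
    rw [hz, mul_zero]
    simpa using hRHS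
  · refine ENNReal.toReal_le_of_le_ofReal hRHS ?_
    calc (μ {ω | cliqueWeight α ω ≤ w})⁻¹
          * μ ({ω | cliqueWeight α ω ≤ w} ∩ {ω | cliqueWeight β ω ≤ w})
        ≤ (μ {ω | cliqueWeight α ω ≤ w})⁻¹
          * (μ {ω | cliqueWeight α ω ≤ w} * μ {ω | ∑ e ∈ Fs, ω e ≤ w}) :=
          mul_le_mul_right (hsub.trans hmul.le) _
      _ = μ {ω | ∑ e ∈ Fs, ω e ≤ w} := by
          rw [← mul_assoc, ENNReal.inv_mul_cancel h0 (measure_ne_top _ _), one_mul]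
      _ ≤ ENNReal.ofReal (w ^ m / (m.factorial : ℝ)) := hC
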